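/- Let V be a vector space over a field k, let B: V × V → k be a bilinear form, and let n be a natural number. Then the span of the linear functionals {B(v,·) : v ∈ V} in the dual space V* has dimension at most n if and only if for all u₁,…,u_{n+1}, v₁,…,v_{n+1} ∈ V the determinant of the (n+1)×(n+1) matrix with (i,j) entry B(uᵢ, vⱼ) is zero. -/

import Mathlib

/-- Linearly independent functionals are jointly surjective. -/
lemma aux_pi_surjective {k V : Type*} [Field k] [AddCommGroup V] [Module k V] {m : ℕ}
    {f : Fin m → V →ₗ[k] k} (hf : LinearIndependent k f) :
    Function.Surjective (LinearMap.pi f) := by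
  rw [← LinearMap.range_eq_top]
  by_contra h
  obtain ⟨φ, φ0, hker⟩ :=
    (LinearMap.range (LinearMap.pi f)).exists_le_ker_of_lt_top (lt_top_iff_ne_top.mpr h)
  have key : ∑ i, φ (Pi.single i 1) • f i = 0 := by
    ext x
    have hx : φ (LinearMap.pi f x) = 0 := hker ⟨x, rfl⟩
    have heq : LinearMap.pi f x = ∑ i, (f i x) • (Pi.single i (1 : k) : Fin m → k) := by
      ext j
      simp [LinearMap.pi_apply, Pi.single_apply, mul_comm]
    rw [heq] at hx
    simpa [mul_comm] using hx
  have hcoef : ∀ i, φ (Pi.single i 1) = 0 := by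
    have := Fintype.linearIndependent_iff.mp hf (fun i => φ (Pi.single i 1)) key
    exact this
  refine φ0 (LinearMap.ext fun w => ?_)
  have hw : w = ∑ i, w i • (Pi.single i (1 : k) : Fin m → k) := by
    ext j; simp [Pi.single_apply, mul_comm]
  rw [hw]
  simp [hcoef]

/-- Let `B` be a bilinear form on a `k`-vector space `V` and `n : ℕ`.  The span of the
functionals `{B(v,·) : v ∈ V}` in `V*` (i.e. the range of `B : V →ₗ V*`) has dimension at most
`n` iff every `(n+1)×(n+1)` matrix `(B(uᵢ,vⱼ))` has zero determinant. -/
theorem rank_bilin_le_iff_det_eq_zero {k V : Type*} [Field k] [AddCommGroup V] [Module k V]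
    (B : V →ₗ[k] V →ₗ[k] k) (n : ℕ) :
    Module.rank k (LinearMap.range B) ≤ n ↔
      ∀ u v : Fin (n + 1) → V,
        Matrix.det (Matrix.of fun i j => B (u i) (v j)) = 0 := by
  constructor
  · intro h u v
    -- The functionals `B (u i)` are linearly dependent.
    have hdep : ¬ LinearIndependent k (fun i : Fin (n + 1) => B (u i)) := by
      intro hind
      have hind' : LinearIndependent k
          (fun i : Fin (n + 1) => (⟨B (u i), ⟨u i, rfl⟩⟩ : LinearMap.range B)) := by
        apply LinearIndependent.of_comp (LinearMap.range B).subtype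
        exact hind
      have hc := hind'.cardinal_lift_le_rank
      rw [Cardinal.mk_fintype, Fintype.card_fin, Cardinal.lift_natCast] at hc
      have hc2 := hc.trans (Cardinal.lift_le.mpr h)
      rw [Cardinal.lift_natCast, Nat.cast_le] at hc2
      omega
    rw [Fintype.not_linearIndependent_iff] at hdep
    obtain ⟨g, hg, i0, hi0⟩ := hdep
    rw [← Matrix.exists_vecMul_eq_zero_iff]
    refine ⟨g, fun hgz => hi0 (by rw [hgz]; rfl), ?_⟩
    ext j
    have := congrArg (fun f : V →ₗ[k] k => f (v j)) hg
    simpa [Matrix.vecMul, dotProduct] using this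
  · intro h
    by_contra hrank
    rw [not_le] at hrank
    have hle : ((n + 1 : ℕ) : Cardinal) ≤ LinearMap.rank B := by
      rw [show n + 1 = Nat.succ n from rfl, Cardinal.nat_succ]
      exact Order.succ_le_of_lt hrank
    obtain ⟨s, hcard, hind⟩ := LinearMap.le_rank_iff_exists_linearIndependent_finset.mp hle
    -- reindex by `Fin (n+1)`
    obtain ⟨e⟩ : Nonempty (Fin (n + 1) ≃ (s : Set V)) := by
      have : Fintype.card (s : Set V) = n + 1 := by simpa using hcard
      exact ⟨(Fintype.equivFinOfCardEq this).symm⟩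
    set u : Fin (n + 1) → V := fun i => (e i : V) with hu
    have hindu : LinearIndependent k (fun i => B (u i)) := by
      exact hind.comp e e.injective
    choose w hw using fun j => aux_pi_surjective hindu (Pi.single j (1 : k))
    have hdet := h u w
    have hmat : (Matrix.of fun i j => B (u i) (w j)) = (1 : Matrix (Fin (n+1)) (Fin (n+1)) k) := by
      ext i j
      have := congrFun (hw j) i
      simp only [LinearMap.pi_apply] at this
      simp [Matrix.one_apply, this, Pi.single_apply]
    rw [hmat, Matrix.det_one] at hdet
    exact one_ne_zero hdet
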